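/- Let 0 < β < 2 and let v : ℝ → ℝ be a 2π-periodic C² function, and set u(x) = v(x) + Λ^β v(x). If u(x) ≥ 0 for all x, then |Λ^β v(x)| ≤ 4 · sup_y u(y) for every x ∈ ℝ, i.e. ‖Λ^β v‖_{L^∞} ≤ 4 ‖u‖_{L^∞}. -/

import Mathlib

open MeasureTheory Real

/-- The constant `c_σ = Γ(1+σ) cos((1−σ)π/2) / π`. -/
noncomputable def cFrac (σ : ℝ) : ℝ :=
  Real.Gamma (1 + σ) * Real.cos ((1 - σ) * Real.pi / 2) / Real.pi

/-- The periodized kernel `K_σ(η) = ∑_{k∈ℤ} |η + 2kπ|^{-(1+σ)}`. -/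
noncomputable def Kper (σ η : ℝ) : ℝ :=
  ∑' k : ℤ, |η + 2 * (k : ℝ) * Real.pi| ^ (-(1 + σ))

/-- The fractional Laplacian `Λ^σ f` of a `2π`-periodic function, defined by
`Λ^σ f(x) = (c_σ/2) ∫_{-π}^{π} (2f(x) − f(x+η) − f(x−η)) K_σ(η) dη`. -/
noncomputable def fracLap (σ : ℝ) (f : ℝ → ℝ) (x : ℝ) : ℝ :=
  (cFrac σ / 2) *
    ∫ η in (-Real.pi)..Real.pi, (2 * f x - f (x + η) - f (x - η)) * Kper σ η

lemma Kper_nonneg (σ η : ℝ) : 0 ≤ Kper σ η :=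
  tsum_nonneg fun _ => Real.rpow_nonneg (abs_nonneg _) _

lemma cFrac_pos {β : ℝ} (h0 : 0 < β) (h2 : β < 2) : 0 < cFrac β := by
  have hπ := Real.pi_pos
  have h1 : 0 < Real.Gamma (1 + β) := Real.Gamma_pos_of_pos (by linarith)
  have hc : 0 < Real.cos ((1 - β) * Real.pi / 2) := by
    apply Real.cos_pos_of_mem_Ioo
    constructor
    · nlinarith
    · nlinarith
  exact div_pos (mul_pos h1 hc) hπ

lemma periodic_deriv' {f : ℝ → ℝ} {c : ℝ} (hf : Function.Periodic f c) :
    Function.Periodic (deriv f) c := by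
  intro x
  have hfe : (fun y => f (y + c)) = f := funext hf
  calc deriv f (x + c) = deriv (fun y => f (y + c)) x := (deriv_comp_add_const f c x).symm
    _ = deriv f x := by rw [hfe]

lemma bdd_of_periodic {g : ℝ → ℝ} (hg : Continuous g)
    (hp : Function.Periodic g (2 * Real.pi)) : ∃ M, 0 ≤ M ∧ ∀ x, |g x| ≤ M := by
  have hcomp : IsCompact (Set.range g) := hp.compact_of_continuous Real.two_pi_pos.ne' hg
  obtain ⟨C, hC⟩ := isBounded_iff_forall_norm_le.mp hcomp.isBounded
  exact ⟨max C 0, le_max_right _ _, fun x =>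
    le_trans (by simpa using hC (g x) ⟨x, rfl⟩) (le_max_left _ _)⟩

lemma exists_max_of_periodic {g : ℝ → ℝ} (hg : Continuous g)
    (hp : Function.Periodic g (2 * Real.pi)) : ∃ x0, ∀ y, g y ≤ g x0 := by
  have hcomp : IsCompact (Set.range g) := hp.compact_of_continuous Real.two_pi_pos.ne' hg
  obtain ⟨a, ⟨x0, rfl⟩, ha⟩ := hcomp.exists_isGreatest ⟨g 0, 0, rfl⟩
  exact ⟨x0, fun y => ha ⟨y, rfl⟩⟩

lemma Kper_le {β : ℝ} (hβ0 : 0 < β) {η : ℝ} (hη : |η| ≤ Real.pi) :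
    Kper β η ≤ |η| ^ (-(1 + β)) + Real.pi ^ (-(1 + β)) * ∑' k : ℤ, |(k : ℝ)| ^ (-(1 + β)) := by
  have hπ := Real.pi_pos
  have hb : (1 : ℝ) < 1 + β := by linarith
  have hsum : Summable (fun k : ℤ => |(k : ℝ)| ^ (-(1 + β))) := Real.summable_abs_int_rpow hb
  have hpneg : -(1 + β) < 0 := by linarith
  set g : ℤ → ℝ := fun k =>
    (if k = 0 then |η| ^ (-(1 + β)) else 0) + Real.pi ^ (-(1 + β)) * |(k : ℝ)| ^ (-(1 + β))
    with hg
  have hdelta : Summable (fun k : ℤ => if k = 0 then |η| ^ (-(1 + β)) else 0) :=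
    summable_of_ne_finset_zero (s := {0}) (fun k hk => by
      simp only [Finset.mem_singleton] at hk; simp [hk])
  have hgs : Summable g := hdelta.add (hsum.mul_left _)
  have hfg : ∀ k : ℤ, |η + 2 * (k : ℝ) * Real.pi| ^ (-(1 + β)) ≤ g k := by
    intro k
    rcases eq_or_ne k 0 with rfl | hk
    · simp [hg]
      positivity
    · have hk1 : (1 : ℝ) ≤ |(k : ℝ)| := by
        rw [← Int.cast_abs]; exact_mod_cast Int.one_le_abs hk
      have h1 : |2 * (k : ℝ) * Real.pi| ≤ |η + 2 * (k : ℝ) * Real.pi| + |η| := by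
        have h := abs_add_le (η + 2 * (k : ℝ) * Real.pi) (-η)
        rw [abs_neg] at h
        calc |2 * (k : ℝ) * Real.pi| = |η + 2 * (k : ℝ) * Real.pi + -η| := by congr 1; ring
          _ ≤ _ := h
      have h2 : |2 * (k : ℝ) * Real.pi| = 2 * |(k : ℝ)| * Real.pi := by
        rw [abs_mul, abs_mul, abs_two, abs_of_pos hπ]
      have hlow : Real.pi * |(k : ℝ)| ≤ |η + 2 * (k : ℝ) * Real.pi| := by
        rw [h2] at h1; nlinarith
      have hposk : 0 < Real.pi * |(k : ℝ)| := by positivity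
      have h3 : |η + 2 * (k : ℝ) * Real.pi| ^ (-(1 + β)) ≤ (Real.pi * |(k : ℝ)|) ^ (-(1 + β)) :=
        Real.rpow_le_rpow_of_nonpos hposk hlow (le_of_lt hpneg)
      have h4 : (Real.pi * |(k : ℝ)|) ^ (-(1 + β)) =
          Real.pi ^ (-(1 + β)) * |(k : ℝ)| ^ (-(1 + β)) :=
        Real.mul_rpow (le_of_lt hπ) (abs_nonneg _)
      simp only [hg, hk, if_neg hk]
      rw [← h4]
      simpa using h3
  by_cases hS : Summable (fun k : ℤ => |η + 2 * (k : ℝ) * Real.pi| ^ (-(1 + β)))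
  · refine (Summable.tsum_le_tsum hfg hS hgs).trans ?_
    rw [hg, Summable.tsum_add hdelta (hsum.mul_left _), tsum_ite_eq (0 : ℤ), tsum_mul_left]
  · rw [Kper, tsum_eq_zero_of_not_summable hS]
    have h5 : 0 ≤ (∑' k : ℤ, |(k : ℝ)| ^ (-(1 + β))) :=
      tsum_nonneg fun _ => Real.rpow_nonneg (abs_nonneg _) _
    have h6 : (0:ℝ) ≤ Real.pi ^ (-(1 + β)) := Real.rpow_nonneg (le_of_lt hπ) _
    have h7 : (0:ℝ) ≤ |η| ^ (-(1 + β)) := Real.rpow_nonneg (abs_nonneg _) _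
    nlinarith

lemma second_diff_bound {v : ℝ → ℝ} {M : ℝ} (hvd : Differentiable ℝ v)
    (hvc : Continuous (deriv v))
    (hL : ∀ y z : ℝ, |deriv v y - deriv v z| ≤ M * |y - z|) :
    ∀ x η : ℝ, |2 * v x - v (x + η) - v (x - η)| ≤ M * η ^ 2 := by
  have hM0 : 0 ≤ M := by have := hL 1 0; simp at this; linarith [abs_nonneg (deriv v 1 - deriv v 0)]
  have key : ∀ x η : ℝ, 0 ≤ η → |2 * v x - v (x + η) - v (x - η)| ≤ M * η ^ 2 := by
    intro x η hη
    have hder1 : ∀ t : ℝ, HasDerivAt (fun s => v (x + s)) (deriv v (x + t)) t := by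
      intro t
      simpa [Function.comp_def] using (hvd (x + t)).hasDerivAt.comp t ((hasDerivAt_id t).const_add x)
    have hder2 : ∀ t : ℝ, HasDerivAt (fun s => v (x - s)) (-deriv v (x - t)) t := by
      intro t
      simpa [Function.comp_def] using (hvd (x - t)).hasDerivAt.comp t ((hasDerivAt_id t).const_sub x)
    have hint1 : IntervalIntegrable (fun t => deriv v (x + t)) volume 0 η :=
      (hvc.comp (continuous_const.add continuous_id)).intervalIntegrable _ _
    have hint2 : IntervalIntegrable (fun t => deriv v (x - t)) volume 0 η :=
      (hvc.comp (continuous_const.sub continuous_id)).intervalIntegrable _ _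
    have h1 : (∫ t in (0:ℝ)..η, deriv v (x + t)) = v (x + η) - v x := by
      have := intervalIntegral.integral_eq_sub_of_hasDerivAt
        (f := fun s => v (x + s)) (f' := fun t => deriv v (x + t))
        (fun t _ => hder1 t) hint1
      simpa using this
    have h2 : (∫ t in (0:ℝ)..η, -deriv v (x - t)) = v (x - η) - v x := by
      have := intervalIntegral.integral_eq_sub_of_hasDerivAt
        (f := fun s => v (x - s)) (f' := fun t => -deriv v (x - t))
        (fun t _ => hder2 t) hint2.neg
      simpa using this
    have h2' : (∫ t in (0:ℝ)..η, deriv v (x - t)) = v x - v (x - η) := by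
      rw [intervalIntegral.integral_neg] at h2; linarith
    have h3 : 2 * v x - v (x + η) - v (x - η)
        = ∫ t in (0:ℝ)..η, (deriv v (x - t) - deriv v (x + t)) := by
      rw [intervalIntegral.integral_sub hint2 hint1, h1, h2']; ring
    have hgint : IntervalIntegrable (fun t : ℝ => M * (2 * t)) volume 0 η :=
      (Continuous.intervalIntegrable (by continuity) _ _)
    have hbound : ‖∫ t in (0:ℝ)..η, (deriv v (x - t) - deriv v (x + t))‖
        ≤ |∫ t in (0:ℝ)..η, M * (2 * t)| := by
      apply intervalIntegral.norm_integral_le_abs_of_norm_le _ hgint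
      filter_upwards [ae_restrict_mem measurableSet_uIoc] with t ht
      rw [Set.uIoc_of_le hη] at ht
      have := hL (x - t) (x + t)
      rw [show x - t - (x + t) = -(2*t) by ring, abs_neg, abs_of_nonneg (by linarith [ht.1] : (0:ℝ) ≤ 2*t)] at this
      simpa [Real.norm_eq_abs] using this
    have hgval : (∫ t in (0:ℝ)..η, M * (2 * t)) = M * η ^ 2 := by
      rw [intervalIntegral.integral_const_mul, intervalIntegral.integral_const_mul,
        integral_id]
      ring
    rw [h3]
    calc |∫ t in (0:ℝ)..η, (deriv v (x - t) - deriv v (x + t))|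
        ≤ |∫ t in (0:ℝ)..η, M * (2 * t)| := hbound
      _ = M * η ^ 2 := by rw [hgval, abs_of_nonneg (by positivity)]
  intro x η
  rcases le_or_gt 0 η with h | h
  · exact key x η h
  · have h2 := key x (-η) (by linarith)
    rw [show x + -η = x - η by ring, show x - -η = x + η by ring,
      show (-η) ^ 2 = η ^ 2 by ring,
      show 2 * v x - v (x - η) - v (x + η) = 2 * v x - v (x + η) - v (x - η) by ring] at h2
    exact h2

lemma abs_rpow_intervalIntegrable {r : ℝ} (hr : -1 < r) (a b : ℝ) :
    IntervalIntegrable (fun x : ℝ => |x| ^ r) volume a b := by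
  have hpos : ∀ c : ℝ, 0 ≤ c → IntervalIntegrable (fun x : ℝ => |x| ^ r) volume 0 c := by
    intro c hc
    rw [intervalIntegrable_iff_integrableOn_Ioc_of_le hc]
    have h1 : IntegrableOn (fun x : ℝ => x ^ r) (Set.Ioc 0 c) volume := by
      rw [← intervalIntegrable_iff_integrableOn_Ioc_of_le hc]
      exact intervalIntegral.intervalIntegrable_rpow' hr
    exact h1.congr_fun (fun x hx => by rw [abs_of_pos hx.1]) measurableSet_Ioc
  have hall : ∀ c : ℝ, IntervalIntegrable (fun x : ℝ => |x| ^ r) volume 0 c := by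
    intro c
    rcases le_or_gt 0 c with hc | hc
    · exact hpos c hc
    · have h1 : IntervalIntegrable (fun x : ℝ => |x| ^ r) volume (-c) (-0) := by
        rw [neg_zero]; exact (hpos (-c) (by linarith)).symm
      have h2 : IntervalIntegrable (fun x : ℝ => |(-x)| ^ r) volume (-c) (-0) := by
        simpa [abs_neg] using h1
      exact ((IntervalIntegrable.iff_comp_neg (f := fun x : ℝ => |x| ^ r) (a := c) (b := 0)).mpr h2).symm
  exact (hall a).symm.trans (hall b)

lemma fracLap_abs_le {β : ℝ} (hβ0 : 0 < β) (hβ2 : β < 2) {v : ℝ → ℝ} {M : ℝ} (hM : 0 ≤ M)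
    (hsd : ∀ x η : ℝ, |2 * v x - v (x + η) - v (x - η)| ≤ M * η ^ 2) :
    ∃ C : ℝ, ∀ x : ℝ, |fracLap β v x| ≤ C := by
  have hπ := Real.pi_pos
  set T : ℝ := ∑' k : ℤ, |(k : ℝ)| ^ (-(1 + β)) with hT
  have hT0 : 0 ≤ T := tsum_nonneg fun _ => Real.rpow_nonneg (abs_nonneg _) _
  have hP0 : (0:ℝ) ≤ Real.pi ^ (-(1 + β)) := Real.rpow_nonneg (le_of_lt hπ) _
  set g : ℝ → ℝ := fun η => M * |η| ^ (1 - β) + M * (Real.pi ^ (-(1 + β)) * T) * η ^ 2 with hgdef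
  have hgint : IntervalIntegrable g volume (-Real.pi) Real.pi := by
    apply IntervalIntegrable.add
    · exact (abs_rpow_intervalIntegrable (by linarith) _ _).const_mul M
    · exact Continuous.intervalIntegrable (by continuity) _ _
  refine ⟨|cFrac β / 2| * |∫ η in (-Real.pi)..Real.pi, g η|, fun x => ?_⟩
  rw [fracLap, abs_mul]
  apply mul_le_mul_of_nonneg_left _ (abs_nonneg _)
  have hb := intervalIntegral.norm_integral_le_abs_of_norm_le (μ := volume)
    (f := fun η => (2 * v x - v (x + η) - v (x - η)) * Kper β η) (g := g)
    (a := -Real.pi) (b := Real.pi) ?_ hgint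
  · simpa [Real.norm_eq_abs] using hb
  · filter_upwards [ae_restrict_mem measurableSet_uIoc] with η hη
    rw [Set.uIoc_of_le (by linarith : -Real.pi ≤ Real.pi)] at hη
    have hηπ : |η| ≤ Real.pi := abs_le.mpr ⟨le_of_lt hη.1, hη.2⟩
    rw [Real.norm_eq_abs, abs_mul, abs_of_nonneg (Kper_nonneg _ _)]
    have hkey : η ^ 2 * |η| ^ (-(1 + β)) ≤ |η| ^ (1 - β) := by
      rcases eq_or_ne η 0 with rfl | hη0
      · simpa using Real.rpow_nonneg (abs_nonneg (0:ℝ)) (1 - β)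
      · have h0 : 0 < |η| := abs_pos.mpr hη0
        have heq : |η| ^ (1 - β) = |η| ^ (2 : ℕ) * |η| ^ (-(1 + β)) := by
          rw [← Real.rpow_natCast |η| 2, ← Real.rpow_add h0]
          congr 1; push_cast; ring
        rw [heq, sq_abs]
    calc |2 * v x - v (x + η) - v (x - η)| * Kper β η
        ≤ (M * η ^ 2) * (|η| ^ (-(1 + β)) + Real.pi ^ (-(1 + β)) * T) := by
          apply mul_le_mul (hsd x η) (Kper_le hβ0 hηπ) (Kper_nonneg _ _) (by positivity)
      _ = M * (η ^ 2 * |η| ^ (-(1 + β))) + M * (Real.pi ^ (-(1 + β)) * T) * η ^ 2 := by ring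
      _ ≤ M * |η| ^ (1 - β) + M * (Real.pi ^ (-(1 + β)) * T) * η ^ 2 := by
          have := mul_le_mul_of_nonneg_left hkey hM; linarith
      _ = g η := rfl

theorem stmt2 (β : ℝ) (hβ0 : 0 < β) (hβ2 : β < 2)
    (v : ℝ → ℝ) (hv : ContDiff ℝ 2 v) (hvper : Function.Periodic v (2 * Real.pi))
    (u : ℝ → ℝ) (hu : ∀ x, u x = v x + fracLap β v x)
    (hupos : ∀ x, 0 ≤ u x) :
    ∀ x, |fracLap β v x| ≤ 4 * ⨆ y, u y := by
  have hπ := Real.pi_pos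
  have hvd : Differentiable ℝ v := hv.differentiable (by norm_num)
  have hv2 : ContDiff ℝ ((1 : ℕ) + (1 : ℕ) : ℕ) v := by exact_mod_cast hv
  have hdv1 : ContDiff ℝ 1 (deriv v) := by
    have := hv2.iterate_deriv' 1 1
    simpa using this
  have hdvd : Differentiable ℝ (deriv v) := hdv1.differentiable one_ne_zero
  have hddvc : Continuous (deriv (deriv v)) := hdv1.continuous_deriv le_rfl
  have hdvper : Function.Periodic (deriv v) (2 * Real.pi) := periodic_deriv' hvper
  have hddvper : Function.Periodic (deriv (deriv v)) (2 * Real.pi) := periodic_deriv' hdvper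
  obtain ⟨M, hM0, hM⟩ := bdd_of_periodic hddvc hddvper
  have hlip : LipschitzWith (Real.toNNReal M) (deriv v) := by
    apply lipschitzWith_of_nnnorm_deriv_le hdvd
    intro y
    rw [← NNReal.coe_le_coe]
    simpa [Real.coe_toNNReal _ hM0, Real.norm_eq_abs] using hM y
  have hL : ∀ y z : ℝ, |deriv v y - deriv v z| ≤ M * |y - z| := by
    intro y z
    have := hlip.dist_le_mul y z
    simpa [Real.dist_eq, Real.coe_toNNReal _ hM0] using this
  have hsd := second_diff_bound hvd hdv1.continuous hL
  obtain ⟨C, hC⟩ := fracLap_abs_le hβ0 hβ2 hM0 hsd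
  obtain ⟨Bv, hBv0, hBv⟩ := bdd_of_periodic hv.continuous hvper
  have hbdd : BddAbove (Set.range u) := by
    refine ⟨Bv + C, ?_⟩
    rintro _ ⟨y, rfl⟩
    rw [hu y]
    have h1 := abs_le.mp (hBv y)
    have h2 := abs_le.mp (hC y)
    linarith [h1.2, h2.2]
  have hles : ∀ y, u y ≤ ⨆ y, u y := fun y => le_ciSup hbdd y
  have hS0 : 0 ≤ ⨆ y, u y := (hupos 0).trans (hles 0)
  -- max principle : v ≤ sup u
  obtain ⟨x0, hx0⟩ := exists_max_of_periodic hv.continuous hvper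
  have hc2 : 0 ≤ cFrac β / 2 := by linarith [cFrac_pos hβ0 hβ2]
  have hfl0 : 0 ≤ fracLap β v x0 := by
    apply mul_nonneg hc2
    apply intervalIntegral.integral_nonneg (by linarith : -Real.pi ≤ Real.pi)
    intro η _
    apply mul_nonneg _ (Kper_nonneg _ _)
    have h1 := hx0 (x0 + η)
    have h2 := hx0 (x0 - η)
    linarith
  have hvle : ∀ y, v y ≤ ⨆ y, u y := by
    intro y
    have h1 := hles x0
    rw [hu x0] at h1
    linarith [hx0 y]
  -- min principle : 0 ≤ v
  have hnegper : Function.Periodic (fun y => -v y) (2 * Real.pi) := fun y => by simp [hvper y]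
  obtain ⟨x1, hx1'⟩ := exists_max_of_periodic hv.continuous.neg hnegper
  have hx1 : ∀ y, v x1 ≤ v y := fun y => by have := hx1' y; simpa using this
  have hfl1 : fracLap β v x1 ≤ 0 := by
    rw [fracLap]
    have hI : (∫ η in (-Real.pi)..Real.pi,
        (2 * v x1 - v (x1 + η) - v (x1 - η)) * Kper β η) ≤ 0 := by
      rw [← neg_nonneg, ← intervalIntegral.integral_neg]
      apply intervalIntegral.integral_nonneg (by linarith : -Real.pi ≤ Real.pi)
      intro η _
      rw [neg_mul_eq_neg_mul]
      apply mul_nonneg _ (Kper_nonneg _ _)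
      have h1 := hx1 (x1 + η)
      have h2 := hx1 (x1 - η)
      linarith
    nlinarith
  have hv0 : ∀ y, 0 ≤ v y := by
    intro y
    have h1 := hupos x1
    rw [hu x1] at h1
    linarith [hx1 y]
  intro x
  have h1 : fracLap β v x = u x - v x := by rw [hu x]; ring
  rw [h1, abs_le]
  constructor
  · linarith [hupos x, hvle x, hS0]
  · linarith [hles x, hv0 x, hS0]
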